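/- For any bounded measurable function f : ℝ^d → ℝ and any Følner sequence (Φ_N) in ℝ^d: liminf_{N→∞} (1/w(Φ_N)) ∫_{Φ_N} f dx ≥ liminf_{l(b-a)→∞} (1/w(b-a)) ∫_a^b f dx, and limsup_{N→∞} (1/w(Φ_N)) ∫_{Φ_N} f dx ≤ limsup_{l(b-a)→∞} (1/w(b-a)) ∫_a^b f dx. -/

import Mathlib

open MeasureTheory Filter Topology

/-- The filter of pairs of boxes `(a, b)` in `ℝ^d` with all side lengths `b i - a i`
tending to infinity. -/
def boxFilter (d : ℕ) : Filter ((Fin d → ℝ) × (Fin d → ℝ)) :=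
  Filter.comap (fun p => p.2 - p.1) (atTop : Filter (Fin d → ℝ))

section Aux

lemma aux_neg_liminf {α : Type*} (l : Filter α) (u : α → ℝ) :
    Filter.liminf (fun x => -u x) l = - Filter.limsup u l := by
  rw [Filter.liminf_eq, Filter.limsup_eq]
  have h : {a : ℝ | ∀ᶠ n in l, a ≤ -u n} = -{a : ℝ | ∀ᶠ n in l, u n ≤ a} := by
    ext a
    simp only [Set.mem_neg, Set.mem_setOf_eq]
    constructor
    · intro h; exact h.mono fun x hx => by linarith
    · intro h; exact h.mono fun x hx => by linarith
  rw [h, Real.sInf_def, neg_neg]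

variable {d : ℕ}

lemma aux_image_add_right (s : Set (Fin d → ℝ)) (y : Fin d → ℝ) :
    (fun x => x + y) '' s = (fun x => x + -y) ⁻¹' s := by
  ext x
  constructor
  · rintro ⟨z, hz, rfl⟩; simpa using hz
  · intro h; exact ⟨x + -y, h, by simp⟩

lemma aux_volume_image_add_right (s : Set (Fin d → ℝ)) (y : Fin d → ℝ) :
    volume ((fun x => x + y) '' s) = volume s := by
  rw [aux_image_add_right, measure_preimage_add_right]

lemma aux_measurableSet_image_add_right {s : Set (Fin d → ℝ)} (hs : MeasurableSet s)
    (y : Fin d → ℝ) : MeasurableSet ((fun x => x + y) '' s) := by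
  rw [aux_image_add_right]
  exact (measurable_add_const (-y)) hs

lemma aux_setIntegral_image_add_right (f : (Fin d → ℝ) → ℝ) (s : Set (Fin d → ℝ))
    (y : Fin d → ℝ) :
    ∫ x in (fun x => x + y) '' s, f x = ∫ x in s, f (x + y) :=
  (measurePreserving_add_right volume y).setIntegral_image_emb
    (MeasurableEquiv.addRight y).measurableEmbedding f s

lemma aux_integrableOn_of_bdd {g : (Fin d → ℝ) → ℝ} {s : Set (Fin d → ℝ)}
    (hg : AEStronglyMeasurable g (volume.restrict s)) {C : ℝ} (hC : ∀ x, |g x| ≤ C)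
    (hs : volume s < ⊤) : IntegrableOn g s volume := by
  haveI : IsFiniteMeasure (volume.restrict s) := ⟨by rwa [Measure.restrict_apply_univ]⟩
  exact Integrable.mono' (integrable_const C) hg
    (Filter.Eventually.of_forall fun x => by simpa [Real.norm_eq_abs] using hC x)

lemma aux_abs_setIntegral_sub_le {f : (Fin d → ℝ) → ℝ} (hf : Measurable f) {M : ℝ}
    (hbd : ∀ x, |f x| ≤ M) {s t : Set (Fin d → ℝ)} (hs : MeasurableSet s)
    (ht : MeasurableSet t) (hsf : volume s < ⊤) (htf : volume t < ⊤) :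
    |(∫ x in s, f x) - ∫ x in t, f x| ≤ M * (volume (symmDiff s t)).toReal := by
  have hints : IntegrableOn f s volume :=
    aux_integrableOn_of_bdd hf.aestronglyMeasurable.restrict hbd hsf
  have hintt : IntegrableOn f t volume :=
    aux_integrableOn_of_bdd hf.aestronglyMeasurable.restrict hbd htf
  have h1 : (∫ x in s ∩ t, f x) + ∫ x in s \ t, f x = ∫ x in s, f x :=
    integral_inter_add_diff ht hints
  have h2 : (∫ x in t ∩ s, f x) + ∫ x in t \ s, f x = ∫ x in t, f x :=
    integral_inter_add_diff hs hintt
  have hinter : s ∩ t = t ∩ s := Set.inter_comm s t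
  have hdiff : (∫ x in s, f x) - ∫ x in t, f x = (∫ x in s \ t, f x) - ∫ x in t \ s, f x := by
    rw [← h1, ← h2, hinter]; ring
  have hb1 : ‖∫ x in s \ t, f x‖ ≤ M * (volume (s \ t)).toReal :=
    norm_setIntegral_le_of_norm_le_const (lt_of_le_of_lt (measure_mono Set.diff_subset) hsf)
      (fun x _ => by simpa [Real.norm_eq_abs] using hbd x) 
  have hb2 : ‖∫ x in t \ s, f x‖ ≤ M * (volume (t \ s)).toReal :=
    norm_setIntegral_le_of_norm_le_const (lt_of_le_of_lt (measure_mono Set.diff_subset) htf)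
      (fun x _ => by simpa [Real.norm_eq_abs] using hbd x) 
  have hsymm : (volume (symmDiff s t)).toReal
      = (volume (s \ t)).toReal + (volume (t \ s)).toReal := by
    rw [Set.symmDiff_def]
    rw [measure_union (disjoint_sdiff_sdiff) (ht.diff hs)]
    rw [ENNReal.toReal_add
      (lt_of_le_of_lt (measure_mono Set.diff_subset) hsf).ne
      (lt_of_le_of_lt (measure_mono Set.diff_subset) htf).ne]
  rw [hdiff, hsymm, mul_add]
  calc |(∫ x in s \ t, f x) - ∫ x in t \ s, f x|
      ≤ |∫ x in s \ t, f x| + |∫ x in t \ s, f x| := abs_sub _ _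
    _ ≤ M * (volume (s \ t)).toReal + M * (volume (t \ s)).toReal := by
        rw [Real.norm_eq_abs] at hb1 hb2; exact add_le_add hb1 hb2

lemma aux_sm_shift {f : (Fin d → ℝ) → ℝ} (hf : Measurable f) (s : Set (Fin d → ℝ)) :
    StronglyMeasurable fun a : Fin d → ℝ => ∫ b in s, f (b + a) :=
  ((hf.comp (measurable_snd.add measurable_fst)).stronglyMeasurable).integral_prod_right'

lemma aux_sm_shift' {f : (Fin d → ℝ) → ℝ} (hf : Measurable f) (s : Set (Fin d → ℝ)) :
    StronglyMeasurable fun a : Fin d → ℝ => ∫ b in s, f (a + b) :=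
  ((hf.comp (measurable_fst.add measurable_snd)).stronglyMeasurable).integral_prod_right'

end Aux

lemma keyLiminf {d : ℕ} (f : (Fin d → ℝ) → ℝ) (hmeas : Measurable f)
    (M : ℝ) (hbd : ∀ x, |f x| ≤ M)
    (Φ : ℕ → Set (Fin d → ℝ)) (hΦmeas : ∀ N, MeasurableSet (Φ N))
    (hΦpos : ∀ N, 0 < volume (Φ N)) (hΦfin : ∀ N, volume (Φ N) < ⊤)
    (hFolner : ∀ y : Fin d → ℝ,
      Tendsto (fun N => volume (symmDiff (Φ N) ((fun x => x + y) '' Φ N)) / volume (Φ N))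
        atTop (𝓝 0)) :
    liminf (fun p : (Fin d → ℝ) × (Fin d → ℝ) =>
        (∏ i, (p.2 i - p.1 i))⁻¹ * ∫ x in Set.Icc p.1 p.2, f x) (boxFilter d)
      ≤ liminf (fun N => ((volume (Φ N)).toReal)⁻¹ * ∫ x in Φ N, f x) atTop := by
  set A : ℕ → ℝ := fun N => ((volume (Φ N)).toReal)⁻¹ * ∫ x in Φ N, f x with hA_def
  set B : (Fin d → ℝ) × (Fin d → ℝ) → ℝ := fun p =>
    (∏ i, (p.2 i - p.1 i))⁻¹ * ∫ x in Set.Icc p.1 p.2, f x with hB_def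
  have hM0 : 0 ≤ M := le_trans (abs_nonneg _) (hbd 0)
  have hTpos : ∀ N, 0 < (volume (Φ N)).toReal :=
    fun N => ENNReal.toReal_pos (hΦpos N).ne' (hΦfin N).ne
  -- boundedness of A
  have hAbd : ∀ N, |A N| ≤ M := by
    intro N
    have h1 : ‖∫ x in Φ N, f x‖ ≤ M * (volume (Φ N)).toReal :=
      norm_setIntegral_le_of_norm_le_const (hΦfin N)
        (fun x _ => by simpa [Real.norm_eq_abs] using hbd x)
    have h2 : |A N| = ((volume (Φ N)).toReal)⁻¹ * |∫ x in Φ N, f x| := by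
      rw [hA_def, abs_mul, abs_inv, abs_of_pos (hTpos N)]
    rw [h2]
    calc ((volume (Φ N)).toReal)⁻¹ * |∫ x in Φ N, f x|
        ≤ ((volume (Φ N)).toReal)⁻¹ * (M * (volume (Φ N)).toReal) := by
          apply mul_le_mul_of_nonneg_left _ (inv_nonneg.mpr (hTpos N).le)
          rwa [Real.norm_eq_abs] at h1
      _ = M := by
          rw [mul_comm M, ← mul_assoc, inv_mul_cancel₀ (hTpos N).ne', one_mul]
  -- boxFilter is NeBot
  haveI hNB : (boxFilter d).NeBot := by
    refine Filter.comap_neBot fun t ht => ?_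
    obtain ⟨u, hu⟩ := Filter.nonempty_of_mem ht
    exact ⟨(0, u), by simpa using hu⟩
  -- B is eventually bounded in boxFilter
  have hBev : ∀ᶠ p in boxFilter d, |B p| ≤ M := by
    have h1 : ∀ᶠ p : (Fin d → ℝ) × (Fin d → ℝ) in boxFilter d, (1 : Fin d → ℝ) ≤ p.2 - p.1 :=
      tendsto_comap.eventually (eventually_ge_atTop 1)
    filter_upwards [h1] with p hp
    have hp' : ∀ i, (1:ℝ) ≤ p.2 i - p.1 i := fun i => by simpa using hp i
    have hle : p.1 ≤ p.2 := fun i => by have := hp' i; linarith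
    have hprod1 : (1:ℝ) ≤ ∏ i, (p.2 i - p.1 i) := by
      calc (1:ℝ) = ∏ _i : Fin d, (1:ℝ) := by simp
        _ ≤ ∏ i, (p.2 i - p.1 i) :=
          Finset.prod_le_prod (fun _ _ => zero_le_one) (fun i _ => hp' i)
    have hppos : (0:ℝ) < ∏ i, (p.2 i - p.1 i) := lt_of_lt_of_le one_pos hprod1
    have hvol : (volume (Set.Icc p.1 p.2)).toReal = ∏ i, (p.2 i - p.1 i) :=
      Real.volume_Icc_pi_toReal hle
    have hfin : volume (Set.Icc p.1 p.2) < ⊤ := by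
      rw [Real.volume_Icc_pi]
      exact ENNReal.prod_lt_top fun i _ => ENNReal.ofReal_lt_top
    have h2 : ‖∫ x in Set.Icc p.1 p.2, f x‖ ≤ M * (volume (Set.Icc p.1 p.2)).toReal :=
      norm_setIntegral_le_of_norm_le_const hfin
        (fun x _ => by simpa [Real.norm_eq_abs] using hbd x)
    rw [hvol] at h2
    have h3 : |B p| = (∏ i, (p.2 i - p.1 i))⁻¹ * |∫ x in Set.Icc p.1 p.2, f x| := by
      rw [hB_def, abs_mul, abs_inv, abs_of_pos hppos]
    rw [h3]
    calc (∏ i, (p.2 i - p.1 i))⁻¹ * |∫ x in Set.Icc p.1 p.2, f x|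
        ≤ (∏ i, (p.2 i - p.1 i))⁻¹ * (M * ∏ i, (p.2 i - p.1 i)) := by
          apply mul_le_mul_of_nonneg_left _ (inv_nonneg.mpr hppos.le)
          rwa [Real.norm_eq_abs] at h2
      _ = M := by
          rw [mul_comm M, ← mul_assoc, inv_mul_cancel₀ hppos.ne', one_mul]
  refine le_of_forall_lt fun c hc => ?_
  obtain ⟨c', hcc', hc'⟩ := exists_between hc
  suffices h : c' ≤ liminf A atTop by exact lt_of_lt_of_le hcc' h
  -- eventual lower bound for B
  have hcob : IsBoundedUnder (· ≥ ·) (boxFilter d) B :=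
    ⟨-M, hBev.mono fun p hp => neg_le_of_abs_le hp⟩
  have hev : ∀ᶠ p in boxFilter d, c' < B p := eventually_lt_of_lt_liminf hc' hcob
  rw [boxFilter, eventually_comap, eventually_atTop] at hev
  obtain ⟨v, hv⟩ := hev
  set v' : Fin d → ℝ := v ⊔ 1 with hv'def
  have hv'1 : (1 : Fin d → ℝ) ≤ v' := le_sup_right
  have hv'0 : (0 : Fin d → ℝ) ≤ v' := le_trans zero_le_one hv'1
  set V : ℝ := ∏ i, v' i with hVdef
  have hV1 : (1:ℝ) ≤ V := by
    calc (1:ℝ) = ∏ _i : Fin d, (1:ℝ) := by simp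
      _ ≤ ∏ i, v' i := Finset.prod_le_prod (fun _ _ => zero_le_one)
          (fun i _ => by simpa using hv'1 i)
  have hVpos : (0:ℝ) < V := lt_of_lt_of_le one_pos hV1
  set Q : Set (Fin d → ℝ) := Set.Icc 0 v' with hQdef
  have hQvol : (volume Q).toReal = V := by
    rw [hQdef, Real.volume_Icc_pi_toReal hv'0]; simp [hVdef]
  have hQfin : volume Q < ⊤ := by
    rw [hQdef, Real.volume_Icc_pi]
    exact ENNReal.prod_lt_top fun i _ => ENNReal.ofReal_lt_top
  -- the averaged function g
  set g : (Fin d → ℝ) → ℝ := fun x => V⁻¹ * ∫ y in Q, f (x + y) with hgdef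
  have hgsm : StronglyMeasurable g := (aux_sm_shift' hmeas Q).const_mul V⁻¹
  have hgbd : ∀ x, |g x| ≤ M := by
    intro x
    have h1 : ‖∫ y in Q, f (x + y)‖ ≤ M * (volume Q).toReal :=
      norm_setIntegral_le_of_norm_le_const hQfin
        (fun y _ => by simpa [Real.norm_eq_abs] using hbd (x + y))
    have h2 : |g x| = V⁻¹ * |∫ y in Q, f (x + y)| := by
      rw [hgdef, abs_mul, abs_inv, abs_of_pos hVpos]
    rw [h2]
    calc V⁻¹ * |∫ y in Q, f (x + y)| ≤ V⁻¹ * (M * V) := by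
          apply mul_le_mul_of_nonneg_left _ (inv_nonneg.mpr hVpos.le)
          rw [← hQvol]; rwa [Real.norm_eq_abs] at h1
      _ = M := by rw [mul_comm M, ← mul_assoc, inv_mul_cancel₀ hVpos.ne', one_mul]
  -- g is pointwise > c'
  have hboxg : ∀ x, c' < g x := by
    intro x
    have h1 := hv v' le_sup_left (x, x + v') (by simp)
    simp only [hB_def] at h1
    have e1 : (∏ i, ((x + v') i - x i)) = V := by simp [hVdef]
    have e2 : Set.Icc x (x + v') = (fun z => z + x) '' Q := by
      rw [aux_image_add_right]
      ext z
      simp only [Set.mem_Icc, Set.mem_preimage, hQdef]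
      constructor
      · rintro ⟨h1', h2'⟩
        refine ⟨fun i => ?_, fun i => ?_⟩
        · have := h1' i; simp at this ⊢; linarith
        · have := h2' i; simp at this ⊢; linarith
      · rintro ⟨h1', h2'⟩
        refine ⟨fun i => ?_, fun i => ?_⟩
        · have := h1' i; simp at this ⊢; linarith
        · have := h2' i; simp at this ⊢; linarith
    have e3 : (∫ z in Set.Icc x (x + v'), f z) = ∫ z in Q, f (z + x) := by
      rw [e2, aux_setIntegral_image_add_right]
    have e4 : (∫ z in Q, f (z + x)) = ∫ z in Q, f (x + z) :=
      integral_congr_ae (Filter.Eventually.of_forall fun z => congrArg f (add_comm z x))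
    rw [hgdef]
    calc c' < (∏ i, ((x + v') i - x i))⁻¹ * ∫ z in Set.Icc x (x + v'), f z := h1
      _ = V⁻¹ * ∫ y in Q, f (x + y) := by rw [e1, e3, e4]
  -- the translated averages
  set hN : ℕ → (Fin d → ℝ) → ℝ :=
    fun N y => ((volume (Φ N)).toReal)⁻¹ * ∫ x in Φ N, f (x + y) with hNdef
  have hNsm : ∀ N, StronglyMeasurable (hN N) :=
    fun N => (aux_sm_shift hmeas (Φ N)).const_mul _
  have hNbd : ∀ N y, |hN N y| ≤ M := by
    intro N y
    have h1 : ‖∫ x in Φ N, f (x + y)‖ ≤ M * (volume (Φ N)).toReal :=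
      norm_setIntegral_le_of_norm_le_const (hΦfin N)
        (fun x _ => by simpa [Real.norm_eq_abs] using hbd (x + y))
    have h2 : |hN N y| = ((volume (Φ N)).toReal)⁻¹ * |∫ x in Φ N, f (x + y)| := by
      simp only [hNdef]
      rw [abs_mul, abs_inv, abs_of_pos (hTpos N)]
    rw [h2]
    calc ((volume (Φ N)).toReal)⁻¹ * |∫ x in Φ N, f (x + y)|
        ≤ ((volume (Φ N)).toReal)⁻¹ * (M * (volume (Φ N)).toReal) := by
          apply mul_le_mul_of_nonneg_left _ (inv_nonneg.mpr (hTpos N).le)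
          rwa [Real.norm_eq_abs] at h1
      _ = M := by rw [mul_comm M, ← mul_assoc, inv_mul_cancel₀ (hTpos N).ne', one_mul]
  -- main per-N lower bound
  have claim : ∀ N, c' - V⁻¹ * (∫ y in Q, |A N - hN N y|) ≤ A N := by
    intro N
    haveI : IsFiniteMeasure (volume.restrict (Φ N)) :=
      ⟨by rw [Measure.restrict_apply_univ]; exact hΦfin N⟩
    haveI : IsFiniteMeasure (volume.restrict Q) :=
      ⟨by rw [Measure.restrict_apply_univ]; exact hQfin⟩
    have hintu : Integrable (Function.uncurry fun x y : Fin d → ℝ => f (x + y))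
        ((volume.restrict (Φ N)).prod (volume.restrict Q)) := by
      refine Integrable.mono' (integrable_const M)
        ((hmeas.comp (measurable_fst.add measurable_snd)).aestronglyMeasurable) ?_
      exact Filter.Eventually.of_forall fun p => by
        simpa [Function.uncurry, Real.norm_eq_abs] using hbd (p.1 + p.2)
    have hswap : (∫ x in Φ N, ∫ y in Q, f (x + y)) = ∫ y in Q, ∫ x in Φ N, f (x + y) :=
      integral_integral_swap hintu
    have hNint : IntegrableOn (hN N) Q volume :=
      aux_integrableOn_of_bdd (hNsm N).aestronglyMeasurable (hNbd N) hQfin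
    have hgint : IntegrableOn g (Φ N) volume :=
      aux_integrableOn_of_bdd hgsm.aestronglyMeasurable hgbd (hΦfin N)
    have hc2 : ((volume (Φ N)).toReal)⁻¹ * (∫ x in Φ N, g x)
        = V⁻¹ * ∫ y in Q, hN N y := by
      simp only [hgdef, hNdef]
      rw [integral_const_mul, integral_const_mul, hswap]; ring
    have hc3 : c' ≤ ((volume (Φ N)).toReal)⁻¹ * ∫ x in Φ N, g x := by
      have h := setIntegral_ge_of_const_le (hΦmeas N) (hΦfin N).ne
        (fun x _ => (hboxg x).le) hgint
      calc c' = ((volume (Φ N)).toReal)⁻¹ * (c' * (volume (Φ N)).toReal) := by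
            rw [mul_comm c', ← mul_assoc, inv_mul_cancel₀ (hTpos N).ne', one_mul]
        _ ≤ _ := mul_le_mul_of_nonneg_left (by rw [smul_eq_mul, mul_comm] at h; exact h) (inv_nonneg.mpr (hTpos N).le)
    have hAconst : A N = V⁻¹ * ∫ _y in Q, A N := by
      rw [setIntegral_const, measureReal_def, hQvol, smul_eq_mul, ← mul_assoc,
        inv_mul_cancel₀ hVpos.ne', one_mul]
    have habs_int : IntegrableOn (fun y => |A N - hN N y|) Q volume :=
      aux_integrableOn_of_bdd
        ((measurable_const.sub (hNsm N).measurable).abs).aestronglyMeasurable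
        (fun y => by
          rw [abs_abs]
          exact (abs_sub _ _).trans (add_le_add (hAbd N) (hNbd N y))) hQfin
    have hdiff_int : IntegrableOn (fun y => A N - hN N y) Q volume :=
      (integrableOn_const hQfin.ne).sub hNint
    have hlow : -(V⁻¹ * ∫ y in Q, |A N - hN N y|) ≤ A N - V⁻¹ * ∫ y in Q, hN N y := by
      have h1 : (∫ y in Q, (A N - hN N y)) = (∫ _y in Q, A N) - ∫ y in Q, hN N y :=
        integral_sub (integrableOn_const hQfin.ne) hNint
      have h2 : -(∫ y in Q, |A N - hN N y|) ≤ ∫ y in Q, (A N - hN N y) := by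
        rw [← integral_neg]
        exact integral_mono habs_int.neg hdiff_int fun y => neg_abs_le _
      have h3 := mul_le_mul_of_nonneg_left h2 (inv_nonneg.mpr hVpos.le)
      rw [h1] at h3
      calc -(V⁻¹ * ∫ y in Q, |A N - hN N y|)
          = V⁻¹ * -(∫ y in Q, |A N - hN N y|) := by ring
        _ ≤ V⁻¹ * ((∫ _y in Q, A N) - ∫ y in Q, hN N y) := h3
        _ = V⁻¹ * (∫ _y in Q, A N) - V⁻¹ * ∫ y in Q, hN N y := by ring
        _ = A N - V⁻¹ * ∫ y in Q, hN N y := by rw [← hAconst]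
    have h4 : c' ≤ V⁻¹ * ∫ y in Q, hN N y := hc2 ▸ hc3
    linarith [hlow, h4]
  -- the error term tends to zero
  have hD : Tendsto (fun N => V⁻¹ * ∫ y in Q, |A N - hN N y|) atTop (𝓝 0) := by
    haveI : IsFiniteMeasure (volume.restrict Q) :=
      ⟨by rw [Measure.restrict_apply_univ]; exact hQfin⟩
    have key : Tendsto (fun N => ∫ y in Q, |A N - hN N y|) atTop
        (𝓝 (∫ _y in Q, (0:ℝ))) := by
      apply tendsto_integral_of_dominated_convergence (fun _ => M + M)
      · exact fun n => ((measurable_const.sub (hNsm n).measurable).abs).aestronglyMeasurable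
      · exact integrable_const _
      · intro n
        exact Filter.Eventually.of_forall fun y => by
          rw [Real.norm_eq_abs, abs_abs]
          exact (abs_sub _ _).trans (add_le_add (hAbd n) (hNbd n y))
      · refine Filter.Eventually.of_forall fun y => ?_
        have himg : ∀ n, (∫ x in Φ n, f (x + y)) = ∫ x in (fun x => x + y) '' Φ n, f x :=
          fun n => (aux_setIntegral_image_add_right f (Φ n) y).symm
        have hub : ∀ n, |A n - hN n y| ≤
            M * ((volume (symmDiff (Φ n) ((fun x => x + y) '' Φ n)) / volume (Φ n))).toReal := by
          intro n
          have himgmeas : MeasurableSet ((fun x => x + y) '' Φ n) :=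
            aux_measurableSet_image_add_right (hΦmeas n) y
          have himgvol : volume ((fun x => x + y) '' Φ n) = volume (Φ n) :=
            aux_volume_image_add_right (Φ n) y
          have hdle := aux_abs_setIntegral_sub_le hmeas hbd (hΦmeas n) himgmeas (hΦfin n)
            (by rw [himgvol]; exact hΦfin n)
          have heq : A n - hN n y = ((volume (Φ n)).toReal)⁻¹ *
              ((∫ x in Φ n, f x) - ∫ x in (fun x => x + y) '' Φ n, f x) := by
            simp only [hA_def, hNdef]; rw [himg n]; ring
          have heq2 : ((volume (Φ n)).toReal)⁻¹ *
              (M * (volume (symmDiff (Φ n) ((fun x => x + y) '' Φ n))).toReal)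
              = M * ((volume (symmDiff (Φ n) ((fun x => x + y) '' Φ n)) / volume (Φ n))).toReal := by
            rw [ENNReal.toReal_div]; ring
          rw [heq, abs_mul, abs_inv, abs_of_pos (hTpos n)]
          calc ((volume (Φ n)).toReal)⁻¹ *
                |(∫ x in Φ n, f x) - ∫ x in (fun x => x + y) '' Φ n, f x|
              ≤ ((volume (Φ n)).toReal)⁻¹ *
                (M * (volume (symmDiff (Φ n) ((fun x => x + y) '' Φ n))).toReal) :=
                mul_le_mul_of_nonneg_left hdle (inv_nonneg.mpr (hTpos n).le)
            _ = _ := heq2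
        have htend : Tendsto (fun n =>
            M * ((volume (symmDiff (Φ n) ((fun x => x + y) '' Φ n)) / volume (Φ n))).toReal)
            atTop (𝓝 0) := by
          have h1 : Tendsto (fun n =>
              ((volume (symmDiff (Φ n) ((fun x => x + y) '' Φ n)) / volume (Φ n))).toReal)
              atTop (𝓝 0) := by
            have h := (ENNReal.tendsto_toReal (by simp : (0:ENNReal) ≠ ⊤)).comp (hFolner y)
            simpa only [Function.comp_def, ENNReal.toReal_zero] using h
          simpa using h1.const_mul M
        exact squeeze_zero (fun n => abs_nonneg _) hub htend
    have h0 : (∫ _y in Q, (0:ℝ)) = 0 := by simp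
    rw [h0] at key
    simpa using key.const_mul V⁻¹
  -- conclude
  have hfinal : Tendsto (fun N => c' - V⁻¹ * ∫ y in Q, |A N - hN N y|) atTop (𝓝 c') := by
    have h := (tendsto_const_nhds : Tendsto (fun _ : ℕ => c') atTop (𝓝 c')).sub hD
    simpa using h
  have h1 : liminf (fun N => c' - V⁻¹ * ∫ y in Q, |A N - hN N y|) atTop = c' :=
    hfinal.liminf_eq
  have hAub : IsBoundedUnder (· ≤ ·) atTop A :=
    ⟨M, eventually_map.mpr (Filter.Eventually.of_forall fun n => le_of_abs_le (hAbd n))⟩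
  have h2 := liminf_le_liminf (Filter.Eventually.of_forall claim)
    hfinal.isBoundedUnder_ge hAub.isCoboundedUnder_ge
  rw [h1] at h2
  exact h2

theorem stmt17 {d : ℕ} (f : (Fin d → ℝ) → ℝ) (hmeas : Measurable f)
    (M : ℝ) (hbd : ∀ x, |f x| ≤ M)
    (Φ : ℕ → Set (Fin d → ℝ)) (hΦmeas : ∀ N, MeasurableSet (Φ N))
    (hΦpos : ∀ N, 0 < volume (Φ N)) (hΦfin : ∀ N, volume (Φ N) < ⊤)
    (hFolner : ∀ y : Fin d → ℝ,
      Tendsto (fun N => volume (symmDiff (Φ N) ((fun x => x + y) '' Φ N)) / volume (Φ N))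
        atTop (𝓝 0)) :
    (liminf (fun N => ((volume (Φ N)).toReal)⁻¹ * ∫ x in Φ N, f x) atTop
      ≥ liminf (fun p : (Fin d → ℝ) × (Fin d → ℝ) =>
          (∏ i, (p.2 i - p.1 i))⁻¹ * ∫ x in Set.Icc p.1 p.2, f x) (boxFilter d))
    ∧
    (limsup (fun N => ((volume (Φ N)).toReal)⁻¹ * ∫ x in Φ N, f x) atTop
      ≤ limsup (fun p : (Fin d → ℝ) × (Fin d → ℝ) =>
          (∏ i, (p.2 i - p.1 i))⁻¹ * ∫ x in Set.Icc p.1 p.2, f x) (boxFilter d)) := by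
  constructor
  · exact keyLiminf f hmeas M hbd Φ hΦmeas hΦpos hΦfin hFolner
  · have h := keyLiminf (fun x => -f x) hmeas.neg M
      (fun x => by rw [abs_neg]; exact hbd x) Φ hΦmeas hΦpos hΦfin hFolner
    simp only [integral_neg, mul_neg] at h
    rw [aux_neg_liminf, aux_neg_liminf] at h
    exact neg_le_neg_iff.mp h
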